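/- Let γ ∈ (0,2), Q = γ/2 + 2/γ, and let α₁, α₂, α₃ be real numbers with ᾱ = α₁ + α₂ + α₃. Set (corresponding to the degenerate weight α₀ = −2/γ): a = (−1/γ)(Q + 4/γ − ᾱ) − 1/2, b = (−1/γ)(Q − α₁ − α₂ + α₃) + 1/2, c = 1 − (2/γ)(Q − α₁), and A = − Γ(c)² Γ(1−a) Γ(1−b) Γ(a−c+1) Γ(b−c+1) / ( Γ(2−c)² Γ(c−a) Γ(c−b) Γ(a) Γ(b) ). Assume none of the Gamma functions appearing on either side below is evaluated at a nonpositive integer. Then A = l(2α₁/γ − 4/γ²) · l((1/γ)(ᾱ − 2α₁ − 2/γ)) / ( l(2 + 4/γ² − 2α₁/γ) · l((1/γ)(ᾱ − 2/γ − 2Q)) · l((1/γ)(ᾱ − 2α₂ − 2/γ)) · l((1/γ)(ᾱ − 2α₃ − 2/γ)) ). -/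

import Mathlib

set_option maxHeartbeats 1000000


/-- The special function `l(x) = Γ(x)/Γ(1-x)`. -/
noncomputable def lr (x : ℝ) : ℝ := Real.Gamma x / Real.Gamma (1 - x)

/-- The hypergeometric connection coefficient `A_γ(-2/γ, α₁, α₂, α₃)`
equals the product of `l`-factors appearing in the dual DOZZ shift equation. -/
theorem connection_coefficient_dual (γ α₁ α₂ α₃ : ℝ) (hγ : γ ∈ Set.Ioo (0:ℝ) 2)
    (a b c A : ℝ)
    (ha : a = (-1/γ) * ((γ/2 + 2/γ) + 4/γ - (α₁ + α₂ + α₃)) - 1/2)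
    (hb : b = (-1/γ) * ((γ/2 + 2/γ) - α₁ - α₂ + α₃) + 1/2)
    (hc : c = 1 - (2/γ) * ((γ/2 + 2/γ) - α₁))
    (hA : A = -(Real.Gamma c ^ 2 * Real.Gamma (1 - a) * Real.Gamma (1 - b)
          * Real.Gamma (a - c + 1) * Real.Gamma (b - c + 1))
        / (Real.Gamma (2 - c) ^ 2 * Real.Gamma (c - a) * Real.Gamma (c - b)
          * Real.Gamma a * Real.Gamma b))
    (hΓ : ∀ x ∈ ([c, 1 - a, 1 - b, a - c + 1, b - c + 1, 2 - c, c - a, c - b, a, b,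
        2*α₁/γ - 4/γ^2, 1 - (2*α₁/γ - 4/γ^2),
        (1/γ)*((α₁+α₂+α₃) - 2*α₁ - 2/γ), 1 - (1/γ)*((α₁+α₂+α₃) - 2*α₁ - 2/γ),
        2 + 4/γ^2 - 2*α₁/γ, 1 - (2 + 4/γ^2 - 2*α₁/γ),
        (1/γ)*((α₁+α₂+α₃) - 2/γ - 2*(γ/2 + 2/γ)),
        1 - (1/γ)*((α₁+α₂+α₃) - 2/γ - 2*(γ/2 + 2/γ)),
        (1/γ)*((α₁+α₂+α₃) - 2*α₂ - 2/γ), 1 - (1/γ)*((α₁+α₂+α₃) - 2*α₂ - 2/γ),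
        (1/γ)*((α₁+α₂+α₃) - 2*α₃ - 2/γ), 1 - (1/γ)*((α₁+α₂+α₃) - 2*α₃ - 2/γ)] : List ℝ),
      ∀ m : ℕ, x ≠ -(m:ℝ)) :
    A = lr (2*α₁/γ - 4/γ^2) * lr ((1/γ)*((α₁+α₂+α₃) - 2*α₁ - 2/γ))
        / (lr (2 + 4/γ^2 - 2*α₁/γ) * lr ((1/γ)*((α₁+α₂+α₃) - 2/γ - 2*(γ/2 + 2/γ)))
          * lr ((1/γ)*((α₁+α₂+α₃) - 2*α₂ - 2/γ))
          * lr ((1/γ)*((α₁+α₂+α₃) - 2*α₃ - 2/γ))) := by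
  have hγ0 : γ ≠ 0 := ne_of_gt hγ.1
  set x1 : ℝ := 2*α₁/γ - 4/γ^2 with hx1
  set x2 : ℝ := (1/γ)*((α₁+α₂+α₃) - 2*α₁ - 2/γ) with hx2
  set x3 : ℝ := 2 + 4/γ^2 - 2*α₁/γ with hx3
  set x4 : ℝ := (1/γ)*((α₁+α₂+α₃) - 2/γ - 2*(γ/2 + 2/γ)) with hx4
  set x5 : ℝ := (1/γ)*((α₁+α₂+α₃) - 2*α₂ - 2/γ) with hx5
  set x6 : ℝ := (1/γ)*((α₁+α₂+α₃) - 2*α₃ - 2/γ) with hx6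
  clear_value x1 x2 x3 x4 x5 x6
  have e1 : c = x1 := by rw [hc, hx1]; field_simp; ring
  have e2 : a - c + 1 = x2 := by rw [ha, hc, hx2]; field_simp; ring
  have e3 : (2:ℝ) - c = x3 := by rw [hc, hx3]; field_simp; ring
  have e4 : a = x4 := by rw [ha, hx4]; field_simp; ring
  have e5 : c - b = x5 := by rw [hb, hc, hx5]; field_simp; ring
  have e6 : b = x6 := by rw [hb, hx6]; field_simp; ring
  have e2' : c - a = 1 - x2 := by rw [← e2]; ring
  have e5' : b - c + 1 = 1 - x5 := by rw [← e5]; ring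
  have e4' : (1:ℝ) - a = 1 - x4 := by rw [e4]
  have e6' : (1:ℝ) - b = 1 - x6 := by rw [e6]
  -- nonvanishing of Gamma values
  have key : ∀ x ∈ ([c, 1 - a, 1 - b, a - c + 1, b - c + 1, 2 - c, c - a, c - b, a, b,
        x1, 1 - x1, x2, 1 - x2, x3, 1 - x3, x4, 1 - x4, x5, 1 - x5,
        x6, 1 - x6] : List ℝ), Real.Gamma x ≠ 0 ∧ x ≠ 0 := by
    intro x hx
    refine ⟨Real.Gamma_ne_zero (hΓ x hx), ?_⟩
    simpa using hΓ x hx 0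
  have G1 := key x1 (by simp)
  have G1' := key (1 - x1) (by simp)
  have G2 := key x2 (by simp)
  have G2' := key (1 - x2) (by simp)
  have G3 := key x3 (by simp)
  have G3' := key (1 - x3) (by simp)
  have G4 := key x4 (by simp)
  have G4' := key (1 - x4) (by simp)
  have G5 := key x5 (by simp)
  have G5' := key (1 - x5) (by simp)
  have G6 := key x6 (by simp)
  have G6' := key (1 - x6) (by simp)
  -- recurrences : x3 = (1 - x1) + 1 and x1 = (1 - x3) + 1
  have k3 : Real.Gamma x3 = (1 - x1) * Real.Gamma (1 - x1) := by
    rw [show x3 = (1 - x1) + 1 by rw [hx1, hx3]; ring, Real.Gamma_add_one G1'.2]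
  have k1 : Real.Gamma x1 = (1 - x3) * Real.Gamma (1 - x3) := by
    rw [show x1 = (1 - x3) + 1 by rw [hx1, hx3]; ring, Real.Gamma_add_one G3'.2]
  have h13 : (1 - x3) = -(1 - x1) := by rw [hx1, hx3]; ring
  rw [hA, e2, e5', e3, e2', e5, e4', e6', e4, e6, e1]
  simp only [lr]
  rw [k3, k1, h13]
  rw [h13] at G3'
  set t : ℝ := 1 - x1 with hT
  clear_value t
  field_simp [G1'.1, G1'.2, G3'.1, G2.1, G2'.1, G4.1, G4'.1, G5.1, G5'.1, G6.1, G6'.1]
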